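/- The additive part of the penalized estimator equals the oblique projection of the local linear estimator, and the non-additive part is the shrunken residual: P_add·β_R = P_{S,R}·β_ll and (I − P_add)·β_R = (I − A_R)·(I − P_{S,R})·β_ll (Proposition 2). -/
import Mathlib

open Matrix

/-- Proposition 2: the additive part of the penalized estimator
equals the oblique projection of the local linear estimator, and the
non-additive part is the shrunken residual:
`P_add·β_R = P_{S,R}·β_ll` and `(I − P_add)·β_R = (I − A_R)·(I − P_{S,R})·β_ll`. -/
theorem penalized_estimator_decomposition
    {N q : ℕ} (hN : 0 < N) (hq : 0 < q)
    (S : Matrix (Fin N) (Fin N) ℝ) (hS : S.PosSemidef)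
    (R : ℝ) (hR : 0 < R)
    (Z : Matrix (Fin q) (Fin N) ℝ)
    (hZ1 : (Zᵀ * Z) * (Zᵀ * Z) = Zᵀ * Z)
    (hZ2 : (Z * Zᵀ) * (Z * Zᵀ) = Z * Zᵀ)
    (hSR : (S + R • (1 : Matrix (Fin N) (Fin N) ℝ)).PosDef)
    (A : Matrix (Fin N) (Fin N) ℝ)
    (hA : A = R • (S + R • (1 : Matrix (Fin N) (Fin N) ℝ))⁻¹)
    (Λ : Matrix (Fin q) (Fin q) ℝ)
    (hΛ : Λ = (1 : Matrix (Fin q) (Fin q) ℝ) - Z * A * Zᵀ)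
    (hpen : (S + R • ((1 : Matrix (Fin N) (Fin N) ℝ) - Zᵀ * Z)).PosDef)
    (P : Matrix (Fin N) (Fin N) ℝ)
    (hP : P = Zᵀ * Λ⁻¹ * Z * ((1 : Matrix (Fin N) (Fin N) ℝ) - A))
    (βll : Fin N → ℝ) (βR : Fin N → ℝ)
    (hβR : βR = ((S + R • ((1 : Matrix (Fin N) (Fin N) ℝ) - Zᵀ * Z))⁻¹ * S).mulVec βll) :
    (Zᵀ * Z).mulVec βR = P.mulVec βll ∧
      ((1 : Matrix (Fin N) (Fin N) ℝ) - Zᵀ * Z).mulVec βR =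
        (((1 : Matrix (Fin N) (Fin N) ℝ) - A) *
          ((1 : Matrix (Fin N) (Fin N) ℝ) - P)).mulVec βll := by
  set M : Matrix (Fin N) (Fin N) ℝ := S + R • 1 with hMdef
  set K : Matrix (Fin N) (Fin N) ℝ := S + R • (1 - Zᵀ * Z) with hKdef
  have hMdet : IsUnit M.det := isUnit_iff_ne_zero.2 hSR.det_pos.ne'
  have hKdet : IsUnit K.det := isUnit_iff_ne_zero.2 hpen.det_pos.ne'
  have hMM : M * M⁻¹ = 1 := Matrix.mul_nonsing_inv M hMdet
  have hMM' : M⁻¹ * M = 1 := Matrix.nonsing_inv_mul M hMdet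
  have hKM : K = M - R • (Zᵀ * Z) := by rw [hKdef, hMdef, smul_sub]; abel
  have hMA : M * A = R • (1 : Matrix (Fin N) (Fin N) ℝ) := by
    rw [hA, mul_smul_comm, hMM]
  have hMAx : ∀ X : Matrix (Fin N) (Fin N) ℝ, M * (A * X) = R • X := by
    intro X; rw [← mul_assoc, hMA, smul_mul_assoc, one_mul]
  have hMiS : M⁻¹ * S = 1 - A := by
    have hSM : S = M - R • 1 := by rw [hMdef]; abel
    rw [hSM, mul_sub, hMM', mul_smul_comm, mul_one, ← hA]
  -- Λ is invertible (Weinstein–Aronszajn)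
  have hΛdet : IsUnit Λ.det := by
    have e2 : M⁻¹ * K = 1 + (-(A * Zᵀ)) * Z := by
      rw [hKM, mul_sub, hMM', mul_smul_comm, ← smul_mul_assoc, ← hA,
        Matrix.neg_mul, Matrix.mul_assoc, ← sub_eq_add_neg]
    have e1 : Λ = 1 + Z * (-(A * Zᵀ)) := by
      rw [hΛ, Matrix.mul_assoc, sub_eq_add_neg, ← Matrix.mul_neg]
    have e3 : Λ.det = M⁻¹.det * K.det := by
      rw [e1, Matrix.det_one_add_mul_comm, ← e2, Matrix.det_mul]
    rw [e3]
    exact (Matrix.isUnit_nonsing_inv_det M hMdet).mul hKdet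
  have hΛΛ : Λ * Λ⁻¹ = 1 := Matrix.mul_nonsing_inv Λ hΛdet
  have hΛΛx : ∀ X : Matrix (Fin q) (Fin N) ℝ, Λ * (Λ⁻¹ * X) = X := by
    intro X; rw [← Matrix.mul_assoc, hΛΛ, Matrix.one_mul]
  -- key rewrite: Z * (A * (Zᵀ * X)) = X - Λ * X
  have hZAZx : ∀ X : Matrix (Fin q) (Fin N) ℝ, Z * (A * (Zᵀ * X)) = X - Λ * X := by
    intro X
    have h0 : Z * A * Zᵀ = 1 - Λ := by rw [hΛ]; abel
    calc Z * (A * (Zᵀ * X)) = (Z * A * Zᵀ) * X := by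
          rw [Matrix.mul_assoc, Matrix.mul_assoc]
      _ = X - Λ * X := by rw [h0, Matrix.sub_mul, Matrix.one_mul]
  -- the Woodbury right inverse of K
  set W : Matrix (Fin N) (Fin N) ℝ :=
    M⁻¹ + A * (Zᵀ * (Λ⁻¹ * (Z * M⁻¹))) with hWdef
  have hKW : K * W = 1 := by
    rw [hKM, hWdef, Matrix.sub_mul, Matrix.mul_add, Matrix.mul_add, hMM,
      hMAx, smul_mul_assoc, smul_mul_assoc]
    simp only [Matrix.mul_assoc]
    rw [hZAZx, hΛΛx]
    simp only [Matrix.mul_sub, smul_sub]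
    abel
  have hKinv : K⁻¹ = W := Matrix.inv_eq_right_inv hKW
  -- K⁻¹ * S in closed form
  have hKS : K⁻¹ * S = (1 - A) + A * (Zᵀ * (Λ⁻¹ * (Z * (1 - A)))) := by
    rw [hKinv, hWdef, Matrix.add_mul, hMiS]
    simp only [Matrix.mul_assoc, hMiS]
  -- claim 1 : (Zᵀ Z) (K⁻¹ S) = P
  have hclaim1 : (Zᵀ * Z) * (K⁻¹ * S) = P := by
    rw [hKS, hP, Matrix.mul_add]
    simp only [Matrix.mul_assoc]
    rw [hZAZx, hΛΛx]
    simp only [Matrix.mul_sub]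
    abel
  -- claim 2
  have hclaim2 : ((1 : Matrix (Fin N) (Fin N) ℝ) - Zᵀ * Z) * (K⁻¹ * S)
      = (1 - A) * (1 - P) := by
    rw [Matrix.sub_mul, Matrix.one_mul, hclaim1, hKS, hP]
    simp only [Matrix.mul_sub, Matrix.sub_mul, Matrix.mul_one, Matrix.one_mul,
      Matrix.mul_assoc]
    abel
  subst hβR
  constructor
  · rw [Matrix.mulVec_mulVec, hclaim1]
  · rw [Matrix.mulVec_mulVec, hclaim2]
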